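/- Let (F, U) be a matched pair of Hopf algebras and M a vector space equipped with a left F-comodule structure m ↦ m⟪−1⟫ ⊗ m⟪0⟫ and a left U-comodule structure m ↦ m⟦−1⟧ ⊗ m⟦0⟧. Then the map m ↦ m⟪−1⟫ ⋈ m⟪0⟫⟦−1⟧ ⊗ m⟪0⟫⟦0⟧ defines a left comodule structure over the bicrossed product coalgebra F ⋈ U if and only if (m⟪0⟫⟦−1⟧)⟨0⟩ ⊗ m⟪−1⟫·(m⟪0⟫⟦−1⟧)⟨1⟩ ⊗ m⟪0⟫⟦0⟧ = m⟦−1⟧ ⊗ (m⟦0⟧)⟪−1⟫ ⊗ (m⟦0⟧)⟪0⟫, where u ↦ u⟨0⟩ ⊗ u⟨1⟩ ∈ U ⊗ F is the right F-coaction on U. -/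

import Mathlib

/-!
STATEMENT 11: Let `(F, U)` be a matched pair of Hopf algebras and `M` a vector space
with a left `F`-comodule structure `∇_F` and a left `U`-comodule structure `∇_U`.
Then `m ↦ m⟪₋₁⟫ ⋈ m⟪₀⟫⟦₋₁⟧ ⊗ m⟪₀⟫⟦₀⟧` is a left comodule structure over the
bicrossed product coalgebra `F ⋈ U` (with `Δ(f ⋈ u) = f₍₁₎ ⋈ u₍₁₎⁽⁰⁾ ⊗ f₍₂₎·u₍₁₎⁽¹⁾ ⋈ u₍₂₎`)
if and only if
`(m⟪₀⟫⟦₋₁⟧)⁽⁰⁾ ⊗ m⟪₋₁⟫·(m⟪₀⟫⟦₋₁⟧)⁽¹⁾ ⊗ m⟪₀⟫⟦₀⟧ = m⟦₋₁⟧ ⊗ (m⟦₀⟧)⟪₋₁⟫ ⊗ (m⟦₀⟧)⟪₀⟫`,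
where `u ↦ u⁽⁰⁾ ⊗ u⁽¹⁾` is the right `F`-coaction on `U`.
-/

attribute [-instance] LieAlgebra.ofAssociativeAlgebra
open TensorProduct LinearMap Coalgebra
noncomputable section

variable {k : Type} [Field k]
variable {M : Type} [AddCommGroup M] [Module k M]

section Generic
variable {H : Type} [AddCommGroup H] [Module k H]

/-- Generic left comodule structure over a "coalgebra" given by comultiplication/counit maps. -/
def IsComodG (Δ : H →ₗ[k] H ⊗[k] H) (ε : H →ₗ[k] k) (cm : M →ₗ[k] H ⊗[k] M) : Prop :=
  ((TensorProduct.assoc k H H M).toLinearMap ∘ₗ (LinearMap.rTensor M Δ) ∘ₗ cm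
      = (LinearMap.lTensor H cm) ∘ₗ cm) ∧
    ((TensorProduct.lid k M).toLinearMap ∘ₗ (LinearMap.rTensor M ε) ∘ₗ cm = LinearMap.id)

end Generic

variable {F U : Type} [CommRing F] [HopfAlgebra k F] [Ring U] [HopfAlgebra k U]

variable (k) in
/-- Swap the first two legs of `A ⊗ (B ⊗ C)`. -/
def swapHead (A B C : Type) [AddCommGroup A] [Module k A]
    [AddCommGroup B] [Module k B] [AddCommGroup C] [Module k C] :
    A ⊗[k] (B ⊗[k] C) →ₗ[k] B ⊗[k] (A ⊗[k] C) :=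
  (TensorProduct.assoc k B A C).toLinearMap ∘ₗ
    (LinearMap.rTensor C (TensorProduct.comm k A B).toLinearMap) ∘ₗ
      (TensorProduct.assoc k A B C).symm.toLinearMap

variable (k F U) in
/-- The comultiplication of the bicrossed product coalgebra `F ⋈ U`:
`Δ(f ⊗ u) = (f₍₁₎ ⊗ u₍₁₎⁽⁰⁾) ⊗ ((f₍₂₎ · u₍₁₎⁽¹⁾) ⊗ u₍₂₎)`. -/
def bprodComul (cU : U →ₗ[k] U ⊗[k] F) :
    F ⊗[k] U →ₗ[k] (F ⊗[k] U) ⊗[k] (F ⊗[k] U) :=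
  (LinearMap.lTensor (F ⊗[k] U)
      ((LinearMap.rTensor U (LinearMap.mul' k F)) ∘ₗ
        (TensorProduct.assoc k F F U).symm.toLinearMap)) ∘ₗ
    (TensorProduct.tensorTensorTensorComm k F F U (F ⊗[k] U)).toLinearMap ∘ₗ
      (LinearMap.lTensor (F ⊗[k] F)
        ((TensorProduct.assoc k U F U).toLinearMap ∘ₗ (LinearMap.rTensor U cU))) ∘ₗ
        (TensorProduct.map (Coalgebra.comul (R := k) (A := F))
          (Coalgebra.comul (R := k) (A := U)))

variable (k F U) in
/-- The counit of the bicrossed product coalgebra `F ⋈ U`. -/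
def bprodCounit : F ⊗[k] U →ₗ[k] k :=
  (TensorProduct.lid k k).toLinearMap ∘ₗ
    (TensorProduct.map (Coalgebra.counit (R := k) (A := F))
      (Coalgebra.counit (R := k) (A := U)))


-- generic naturality lemmas
set_option synthInstance.maxHeartbeats 1000000
set_option maxHeartbeats 1000000

lemma lid_nat {X Y : Type} [AddCommMonoid X] [Module k X] [AddCommMonoid Y] [Module k Y]
    (W : X →ₗ[k] Y) :
    (TensorProduct.lid k Y).toLinearMap ∘ₗ LinearMap.lTensor k W
      = W ∘ₗ (TensorProduct.lid k X).toLinearMap := by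
  ext x
  simp

lemma assoc_symm_nat {A B X Y : Type} [AddCommGroup A] [Module k A] [AddCommGroup B] [Module k B]
    [AddCommGroup X] [Module k X] [AddCommGroup Y] [Module k Y] (W : X →ₗ[k] Y) :
    LinearMap.lTensor (A ⊗[k] B) W ∘ₗ (TensorProduct.assoc k A B X).symm.toLinearMap
      = (TensorProduct.assoc k A B Y).symm.toLinearMap ∘ₗ
        LinearMap.lTensor A (LinearMap.lTensor B W) := by
  ext a b x
  simp

variable (k F U) in
/-- The mixing map `f ⊗ (u ⊗ x) ↦ u⁽⁰⁾ ⊗ ((f · u⁽¹⁾) ⊗ x)`. -/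
def mixMap (cU : U →ₗ[k] U ⊗[k] F) (X : Type) [AddCommGroup X] [Module k X] :
    F ⊗[k] (U ⊗[k] X) →ₗ[k] U ⊗[k] (F ⊗[k] X) :=
  (LinearMap.lTensor U ((LinearMap.rTensor X (LinearMap.mul' k F)) ∘ₗ
      (TensorProduct.assoc k F F X).symm.toLinearMap)) ∘ₗ
    (swapHead k F U (F ⊗[k] X)) ∘ₗ
      (LinearMap.lTensor F ((TensorProduct.assoc k U F X).toLinearMap ∘ₗ
        (LinearMap.rTensor X cU)))

variable (k F U) in
/-- Regrouping equivalence. -/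
def bigPhi : F ⊗[k] (U ⊗[k] (F ⊗[k] (U ⊗[k] M))) ≃ₗ[k] (F ⊗[k] U) ⊗[k] ((F ⊗[k] U) ⊗[k] M) :=
  (TensorProduct.assoc k F U (F ⊗[k] (U ⊗[k] M))).symm ≪≫ₗ
    TensorProduct.congr (LinearEquiv.refl k (F ⊗[k] U)) (TensorProduct.assoc k F U M).symm

-- naturality of mixMap in X
lemma mixMap_nat (cU : U →ₗ[k] U ⊗[k] F) {X Y : Type} [AddCommGroup X] [Module k X]
    [AddCommGroup Y] [Module k Y] (g : X →ₗ[k] Y) :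
    LinearMap.lTensor U (LinearMap.lTensor F g) ∘ₗ mixMap k F U cU X
      = mixMap k F U cU Y ∘ₗ LinearMap.lTensor F (LinearMap.lTensor U g) := by
  apply TensorProduct.ext'
  intro f ux
  induction ux using TensorProduct.induction_on with
  | zero => simp [tmul_zero]
  | add a b ha hb => simp only [tmul_add, map_add, ha, hb]
  | tmul u x =>
    simp only [mixMap, swapHead, LinearMap.coe_comp, Function.comp_apply,
      LinearMap.lTensor_tmul, LinearMap.rTensor_tmul, LinearEquiv.coe_coe]
    induction cU u using TensorProduct.induction_on with
    | zero => simp only [zero_tmul, tmul_zero, map_zero]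
    | add a b ha hb => simp only [add_tmul, tmul_add, map_add, ha, hb]
    | tmul u' f' =>
      simp [mul'_apply]

lemma keyStruct_aux (a b : F) (v : U) (n : M) (w : U ⊗[k] F) :
    (TensorProduct.assoc k (F ⊗[k] U) (F ⊗[k] U) M)
        ((LinearMap.lTensor (F ⊗[k] U) (LinearMap.rTensor U (LinearMap.mul' k F) ∘ₗ
            (TensorProduct.assoc k F F U).symm.toLinearMap))
            ((TensorProduct.tensorTensorTensorComm k F F U (F ⊗[k] U))
              ((a ⊗ₜ[k] b) ⊗ₜ[k] (TensorProduct.assoc k U F U) (w ⊗ₜ[k] v))) ⊗ₜ[k] n)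
      = (TensorProduct.congr (LinearEquiv.refl k (F ⊗[k] U)) (TensorProduct.assoc k F U M).symm)
          ((TensorProduct.assoc k F U (F ⊗[k] (U ⊗[k] M))).symm
            (a ⊗ₜ[k]
              (LinearMap.lTensor U (LinearMap.rTensor (U ⊗[k] M) (LinearMap.mul' k F) ∘ₗ
                  (TensorProduct.assoc k F F (U ⊗[k] M)).symm.toLinearMap))
                ((TensorProduct.assoc k U F (F ⊗[k] (U ⊗[k] M)))
                  ((LinearMap.rTensor (F ⊗[k] (U ⊗[k] M)) (TensorProduct.comm k F U).toLinearMap)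
                    ((TensorProduct.assoc k F U (F ⊗[k] (U ⊗[k] M))).symm
                      (b ⊗ₜ[k] (TensorProduct.assoc k U F (U ⊗[k] M)) (w ⊗ₜ[k] (v ⊗ₜ[k] n)))))))) := by
  induction w using TensorProduct.induction_on with
  | zero => simp only [zero_tmul, tmul_zero, map_zero]
  | add x y hx hy => simp only [add_tmul, tmul_add, map_add, hx, hy]
  | tmul u' f' => simp [mul'_apply]

lemma keyStruct (cU : U →ₗ[k] U ⊗[k] F) :
    (TensorProduct.assoc k (F ⊗[k] U) (F ⊗[k] U) M).toLinearMap ∘ₗ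
      (LinearMap.rTensor M (LinearMap.lTensor (F ⊗[k] U)
        ((LinearMap.rTensor U (LinearMap.mul' k F)) ∘ₗ
          (TensorProduct.assoc k F F U).symm.toLinearMap))) ∘ₗ
      (LinearMap.rTensor M (TensorProduct.tensorTensorTensorComm k F F U (F ⊗[k] U)).toLinearMap) ∘ₗ
      (LinearMap.rTensor M (LinearMap.lTensor (F ⊗[k] F)
        ((TensorProduct.assoc k U F U).toLinearMap ∘ₗ (LinearMap.rTensor U cU)))) ∘ₗ
      (TensorProduct.assoc k (F ⊗[k] F) (U ⊗[k] U) M).symm.toLinearMap ∘ₗ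
      (TensorProduct.assoc k F F ((U ⊗[k] U) ⊗[k] M)).symm.toLinearMap ∘ₗ
      (LinearMap.lTensor F (LinearMap.lTensor F ((TensorProduct.assoc k U U M).symm.toLinearMap)))
    = (bigPhi k F U (M := M)).toLinearMap ∘ₗ
        LinearMap.lTensor F (mixMap k F U cU (U ⊗[k] M)) := by
  ext a b u v n
  simp only [mixMap, swapHead, bigPhi, LinearMap.coe_comp, Function.comp_apply,
    LinearMap.lTensor_tmul, LinearMap.rTensor_tmul, LinearEquiv.coe_coe,
    TensorProduct.assoc_tmul, TensorProduct.assoc_symm_tmul, TensorProduct.comm_tmul,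
    TensorProduct.tensorTensorTensorComm_tmul, LinearEquiv.trans_apply,
    TensorProduct.congr_tmul, LinearEquiv.refl_apply, LinearMap.compr₂_apply,
    TensorProduct.mk_apply]
  exact keyStruct_aux a b v n (cU u)

section Nat
variable {A B A' B' X Y : Type} [AddCommGroup A] [Module k A] [AddCommGroup B] [Module k B]
  [AddCommGroup A'] [Module k A'] [AddCommGroup B'] [Module k B']
  [AddCommGroup X] [Module k X] [AddCommGroup Y] [Module k Y]

lemma structA (φ : A →ₗ[k] A') (ψ : B →ₗ[k] B') :
    LinearMap.rTensor X (TensorProduct.map φ ψ) ∘ₗ (TensorProduct.assoc k A B X).symm.toLinearMap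
      = (TensorProduct.assoc k A' B' X).symm.toLinearMap ∘ₗ
          TensorProduct.map φ (LinearMap.rTensor X ψ) := by
  ext a b x
  simp

lemma structB {A A' X Y : Type} [AddCommGroup A] [Module k A] [AddCommGroup A'] [Module k A']
    [AddCommGroup X] [Module k X] [AddCommGroup Y] [Module k Y]
    (φ : A →ₗ[k] A') (g : X →ₗ[k] Y) :
    TensorProduct.map φ g = LinearMap.lTensor A' g ∘ₗ LinearMap.rTensor X φ :=
  (LinearMap.lTensor_comp_rTensor ..).symm

lemma map_lTensor {A A' X Y Z : Type} [AddCommGroup A] [Module k A] [AddCommGroup A'] [Module k A']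
    [AddCommGroup X] [Module k X] [AddCommGroup Y] [Module k Y] [AddCommGroup Z] [Module k Z]
    (φ : A →ₗ[k] A') (g : Y →ₗ[k] Z) (h : X →ₗ[k] Y) :
    TensorProduct.map φ g ∘ₗ LinearMap.lTensor A h = TensorProduct.map φ (g ∘ₗ h) := by
  ext a x
  simp

lemma extract_comod {H X : Type} [AddCommMonoid H] [Module k H] [AddCommMonoid X] [Module k X]
    (ε : H →ₗ[k] k) (c : M →ₗ[k] H ⊗[k] M)
    (hε : (TensorProduct.lid k M).toLinearMap ∘ₗ LinearMap.rTensor M ε ∘ₗ c = LinearMap.id)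
    (W : M →ₗ[k] X) :
    (TensorProduct.lid k X).toLinearMap ∘ₗ LinearMap.rTensor X ε ∘ₗ LinearMap.lTensor H W ∘ₗ c
      = W := by
  have h1 : LinearMap.rTensor X ε ∘ₗ LinearMap.lTensor H W
      = LinearMap.lTensor k W ∘ₗ LinearMap.rTensor M ε := by
    rw [LinearMap.rTensor_comp_lTensor, LinearMap.lTensor_comp_rTensor]
  calc (TensorProduct.lid k X).toLinearMap ∘ₗ LinearMap.rTensor X ε ∘ₗ LinearMap.lTensor H W ∘ₗ c
      = (TensorProduct.lid k X).toLinearMap ∘ₗ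
          (LinearMap.rTensor X ε ∘ₗ LinearMap.lTensor H W) ∘ₗ c := by
        simp only [LinearMap.comp_assoc]
    _ = ((TensorProduct.lid k X).toLinearMap ∘ₗ LinearMap.lTensor k W) ∘ₗ
          LinearMap.rTensor M ε ∘ₗ c := by
        rw [h1]; simp only [LinearMap.comp_assoc]
    _ = (W ∘ₗ (TensorProduct.lid k M).toLinearMap) ∘ₗ LinearMap.rTensor M ε ∘ₗ c := by
        rw [lid_nat]
    _ = W ∘ₗ ((TensorProduct.lid k M).toLinearMap ∘ₗ LinearMap.rTensor M ε ∘ₗ c) := by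
        simp only [LinearMap.comp_assoc]
    _ = W := by rw [hε, LinearMap.comp_id]

lemma counitStruct :
    (TensorProduct.lid k M).toLinearMap ∘ₗ LinearMap.rTensor M (bprodCounit k F U) ∘ₗ
        (TensorProduct.assoc k F U M).symm.toLinearMap
      = ((TensorProduct.lid k M).toLinearMap ∘ₗ
          LinearMap.rTensor M (Coalgebra.counit (R := k) (A := F))) ∘ₗ
          LinearMap.lTensor F ((TensorProduct.lid k M).toLinearMap ∘ₗ
            LinearMap.rTensor M (Coalgebra.counit (R := k) (A := U))) := by
  ext f u m
  simp [bprodCounit, mul_smul, TensorProduct.smul_tmul']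
  rw [smul_comm]

lemma bigPhiStruct :
    (TensorProduct.assoc k F U ((F ⊗[k] U) ⊗[k] M)).symm.toLinearMap ∘ₗ
        LinearMap.lTensor F (LinearMap.lTensor U ((TensorProduct.assoc k F U M).symm.toLinearMap))
      = (bigPhi k F U (M := M)).toLinearMap := by
  ext f u x
  simp [bigPhi]

variable {cU : U →ₗ[k] U ⊗[k] F} {cmF : M →ₗ[k] F ⊗[k] M} {cmU : M →ₗ[k] U ⊗[k] M}

lemma lemmaR :
    LinearMap.lTensor (F ⊗[k] U) ((TensorProduct.assoc k F U M).symm.toLinearMap ∘ₗ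
        LinearMap.lTensor F cmU ∘ₗ cmF) ∘ₗ
      ((TensorProduct.assoc k F U M).symm.toLinearMap ∘ₗ LinearMap.lTensor F cmU ∘ₗ cmF)
    = (bigPhi k F U (M := M)).toLinearMap ∘ₗ
        LinearMap.lTensor F (LinearMap.lTensor U (LinearMap.lTensor F cmU ∘ₗ cmF) ∘ₗ cmU) ∘ₗ
          cmF := by
  set γ := (TensorProduct.assoc k F U M).symm.toLinearMap ∘ₗ LinearMap.lTensor F cmU ∘ₗ cmF
    with hγ
  calc LinearMap.lTensor (F ⊗[k] U) γ ∘ₗ γ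
      = (LinearMap.lTensor (F ⊗[k] U) γ ∘ₗ (TensorProduct.assoc k F U M).symm.toLinearMap) ∘ₗ
          (LinearMap.lTensor F cmU ∘ₗ cmF) := by
        rw [hγ]; simp only [LinearMap.comp_assoc]
    _ = ((TensorProduct.assoc k F U ((F ⊗[k] U) ⊗[k] M)).symm.toLinearMap ∘ₗ
          LinearMap.lTensor F (LinearMap.lTensor U γ)) ∘ₗ
          (LinearMap.lTensor F cmU ∘ₗ cmF) := by rw [assoc_symm_nat]
    _ = (TensorProduct.assoc k F U ((F ⊗[k] U) ⊗[k] M)).symm.toLinearMap ∘ₗ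
          (LinearMap.lTensor F (LinearMap.lTensor U γ) ∘ₗ LinearMap.lTensor F cmU) ∘ₗ cmF := by
        simp only [LinearMap.comp_assoc]
    _ = (TensorProduct.assoc k F U ((F ⊗[k] U) ⊗[k] M)).symm.toLinearMap ∘ₗ
          LinearMap.lTensor F (LinearMap.lTensor U γ ∘ₗ cmU) ∘ₗ cmF := by
        rw [← LinearMap.lTensor_comp]
    _ = (TensorProduct.assoc k F U ((F ⊗[k] U) ⊗[k] M)).symm.toLinearMap ∘ₗ
          LinearMap.lTensor F ((LinearMap.lTensor U
              ((TensorProduct.assoc k F U M).symm.toLinearMap) ∘ₗ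
            LinearMap.lTensor U (LinearMap.lTensor F cmU ∘ₗ cmF)) ∘ₗ cmU) ∘ₗ cmF := by
        rw [hγ]
        rw [show LinearMap.lTensor U ((TensorProduct.assoc k F U M).symm.toLinearMap ∘ₗ
            LinearMap.lTensor F cmU ∘ₗ cmF)
          = LinearMap.lTensor U ((TensorProduct.assoc k F U M).symm.toLinearMap) ∘ₗ
            LinearMap.lTensor U (LinearMap.lTensor F cmU ∘ₗ cmF) from by
          rw [← LinearMap.lTensor_comp]]
    _ = ((TensorProduct.assoc k F U ((F ⊗[k] U) ⊗[k] M)).symm.toLinearMap ∘ₗ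
          LinearMap.lTensor F (LinearMap.lTensor U
            ((TensorProduct.assoc k F U M).symm.toLinearMap))) ∘ₗ
          LinearMap.lTensor F (LinearMap.lTensor U (LinearMap.lTensor F cmU ∘ₗ cmF) ∘ₗ cmU) ∘ₗ
            cmF := by
        simp only [LinearMap.lTensor_comp, LinearMap.comp_assoc]
    _ = (bigPhi k F U (M := M)).toLinearMap ∘ₗ
          LinearMap.lTensor F (LinearMap.lTensor U (LinearMap.lTensor F cmU ∘ₗ cmF) ∘ₗ cmU) ∘ₗ
            cmF := by rw [bigPhiStruct]

lemma tailL
    (hF1 : (TensorProduct.assoc k F F M).toLinearMap ∘ₗ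
        (LinearMap.rTensor M (Coalgebra.comul (R := k) (A := F))) ∘ₗ cmF
      = (LinearMap.lTensor F cmF) ∘ₗ cmF)
    (hU1 : (TensorProduct.assoc k U U M).toLinearMap ∘ₗ
        (LinearMap.rTensor M (Coalgebra.comul (R := k) (A := U))) ∘ₗ cmU
      = (LinearMap.lTensor U cmU) ∘ₗ cmU) :
    LinearMap.rTensor M (TensorProduct.map (Coalgebra.comul (R := k) (A := F))
        (Coalgebra.comul (R := k) (A := U))) ∘ₗ
      (TensorProduct.assoc k F U M).symm.toLinearMap ∘ₗ LinearMap.lTensor F cmU ∘ₗ cmF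
    = (TensorProduct.assoc k (F ⊗[k] F) (U ⊗[k] U) M).symm.toLinearMap ∘ₗ
      (TensorProduct.assoc k F F ((U ⊗[k] U) ⊗[k] M)).symm.toLinearMap ∘ₗ
      (LinearMap.lTensor F (LinearMap.lTensor F ((TensorProduct.assoc k U U M).symm.toLinearMap))) ∘ₗ
      LinearMap.lTensor F (LinearMap.lTensor F (LinearMap.lTensor U cmU ∘ₗ cmU)) ∘ₗ
      LinearMap.lTensor F cmF ∘ₗ cmF := by
  have h1 : LinearMap.rTensor M (Coalgebra.comul (R := k) (A := U)) ∘ₗ cmU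
      = (TensorProduct.assoc k U U M).symm.toLinearMap ∘ₗ
          (LinearMap.lTensor U cmU ∘ₗ cmU) :=
    (LinearEquiv.eq_toLinearMap_symm_comp _ _).mpr hU1
  have h2 : LinearMap.rTensor M (Coalgebra.comul (R := k) (A := F)) ∘ₗ cmF
      = (TensorProduct.assoc k F F M).symm.toLinearMap ∘ₗ
          (LinearMap.lTensor F cmF ∘ₗ cmF) :=
    (LinearEquiv.eq_toLinearMap_symm_comp _ _).mpr hF1
  calc LinearMap.rTensor M (TensorProduct.map (Coalgebra.comul (R := k) (A := F))
        (Coalgebra.comul (R := k) (A := U))) ∘ₗ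
        (TensorProduct.assoc k F U M).symm.toLinearMap ∘ₗ LinearMap.lTensor F cmU ∘ₗ cmF
      = ((TensorProduct.assoc k (F ⊗[k] F) (U ⊗[k] U) M).symm.toLinearMap ∘ₗ
          TensorProduct.map (Coalgebra.comul (R := k) (A := F))
            (LinearMap.rTensor M (Coalgebra.comul (R := k) (A := U)))) ∘ₗ
          LinearMap.lTensor F cmU ∘ₗ cmF := by
        conv_lhs => rw [← LinearMap.comp_assoc]
        rw [structA]
    _ = (TensorProduct.assoc k (F ⊗[k] F) (U ⊗[k] U) M).symm.toLinearMap ∘ₗ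
          (TensorProduct.map (Coalgebra.comul (R := k) (A := F))
            (LinearMap.rTensor M (Coalgebra.comul (R := k) (A := U)) ∘ₗ cmU)) ∘ₗ cmF := by
        simp only [LinearMap.comp_assoc]
        conv_lhs => rw [← LinearMap.comp_assoc (cmF) (LinearMap.lTensor F cmU)]
        rw [_root_.map_lTensor]
    _ = (TensorProduct.assoc k (F ⊗[k] F) (U ⊗[k] U) M).symm.toLinearMap ∘ₗ
          (LinearMap.lTensor (F ⊗[k] F) ((TensorProduct.assoc k U U M).symm.toLinearMap ∘ₗ
              (LinearMap.lTensor U cmU ∘ₗ cmU)) ∘ₗ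
            LinearMap.rTensor M (Coalgebra.comul (R := k) (A := F))) ∘ₗ cmF := by
        rw [h1, structB]
    _ = (TensorProduct.assoc k (F ⊗[k] F) (U ⊗[k] U) M).symm.toLinearMap ∘ₗ
          LinearMap.lTensor (F ⊗[k] F) ((TensorProduct.assoc k U U M).symm.toLinearMap ∘ₗ
              (LinearMap.lTensor U cmU ∘ₗ cmU)) ∘ₗ
            (TensorProduct.assoc k F F M).symm.toLinearMap ∘ₗ
              (LinearMap.lTensor F cmF ∘ₗ cmF) := by
        simp only [LinearMap.comp_assoc, h2]
    _ = (TensorProduct.assoc k (F ⊗[k] F) (U ⊗[k] U) M).symm.toLinearMap ∘ₗ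
          ((TensorProduct.assoc k F F ((U ⊗[k] U) ⊗[k] M)).symm.toLinearMap ∘ₗ
            LinearMap.lTensor F (LinearMap.lTensor F
              ((TensorProduct.assoc k U U M).symm.toLinearMap ∘ₗ
                (LinearMap.lTensor U cmU ∘ₗ cmU)))) ∘ₗ
              (LinearMap.lTensor F cmF ∘ₗ cmF) := by
        conv_lhs => rw [← LinearMap.comp_assoc
          (LinearMap.lTensor F cmF ∘ₗ cmF)
          ((TensorProduct.assoc k F F M).symm.toLinearMap)]
        rw [assoc_symm_nat]
    _ = (TensorProduct.assoc k (F ⊗[k] F) (U ⊗[k] U) M).symm.toLinearMap ∘ₗ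
      (TensorProduct.assoc k F F ((U ⊗[k] U) ⊗[k] M)).symm.toLinearMap ∘ₗ
      (LinearMap.lTensor F (LinearMap.lTensor F ((TensorProduct.assoc k U U M).symm.toLinearMap))) ∘ₗ
      LinearMap.lTensor F (LinearMap.lTensor F (LinearMap.lTensor U cmU ∘ₗ cmU)) ∘ₗ
      LinearMap.lTensor F cmF ∘ₗ cmF := by
        simp only [LinearMap.lTensor_comp, LinearMap.comp_assoc]

lemma lemmaL
    (hF1 : (TensorProduct.assoc k F F M).toLinearMap ∘ₗ
        (LinearMap.rTensor M (Coalgebra.comul (R := k) (A := F))) ∘ₗ cmF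
      = (LinearMap.lTensor F cmF) ∘ₗ cmF)
    (hU1 : (TensorProduct.assoc k U U M).toLinearMap ∘ₗ
        (LinearMap.rTensor M (Coalgebra.comul (R := k) (A := U))) ∘ₗ cmU
      = (LinearMap.lTensor U cmU) ∘ₗ cmU) :
    (TensorProduct.assoc k (F ⊗[k] U) (F ⊗[k] U) M).toLinearMap ∘ₗ
        LinearMap.rTensor M (bprodComul k F U cU) ∘ₗ
        ((TensorProduct.assoc k F U M).symm.toLinearMap ∘ₗ LinearMap.lTensor F cmU ∘ₗ cmF)
      = (bigPhi k F U (M := M)).toLinearMap ∘ₗ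
          LinearMap.lTensor F (mixMap k F U cU (U ⊗[k] M)) ∘ₗ
          LinearMap.lTensor F (LinearMap.lTensor F (LinearMap.lTensor U cmU ∘ₗ cmU)) ∘ₗ
          LinearMap.lTensor F cmF ∘ₗ cmF := by
  have hkey := congrArg (fun g => g ∘ₗ
      (LinearMap.lTensor F (LinearMap.lTensor F (LinearMap.lTensor U cmU ∘ₗ cmU)) ∘ₗ
        LinearMap.lTensor F cmF ∘ₗ cmF)) (keyStruct (M := M) cU)
  simp only [LinearMap.comp_assoc] at hkey
  calc (TensorProduct.assoc k (F ⊗[k] U) (F ⊗[k] U) M).toLinearMap ∘ₗ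
        LinearMap.rTensor M (bprodComul k F U cU) ∘ₗ
        ((TensorProduct.assoc k F U M).symm.toLinearMap ∘ₗ LinearMap.lTensor F cmU ∘ₗ cmF)
      = (TensorProduct.assoc k (F ⊗[k] U) (F ⊗[k] U) M).toLinearMap ∘ₗ
        (LinearMap.rTensor M (LinearMap.lTensor (F ⊗[k] U)
          ((LinearMap.rTensor U (LinearMap.mul' k F)) ∘ₗ
            (TensorProduct.assoc k F F U).symm.toLinearMap))) ∘ₗ
        (LinearMap.rTensor M
          (TensorProduct.tensorTensorTensorComm k F F U (F ⊗[k] U)).toLinearMap) ∘ₗ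
        (LinearMap.rTensor M (LinearMap.lTensor (F ⊗[k] F)
          ((TensorProduct.assoc k U F U).toLinearMap ∘ₗ (LinearMap.rTensor U cU)))) ∘ₗ
        LinearMap.rTensor M (TensorProduct.map (Coalgebra.comul (R := k) (A := F))
          (Coalgebra.comul (R := k) (A := U))) ∘ₗ
        (TensorProduct.assoc k F U M).symm.toLinearMap ∘ₗ LinearMap.lTensor F cmU ∘ₗ cmF := by
        simp only [bprodComul, LinearMap.rTensor_comp, LinearMap.comp_assoc]
    _ = (TensorProduct.assoc k (F ⊗[k] U) (F ⊗[k] U) M).toLinearMap ∘ₗ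
        (LinearMap.rTensor M (LinearMap.lTensor (F ⊗[k] U)
          ((LinearMap.rTensor U (LinearMap.mul' k F)) ∘ₗ
            (TensorProduct.assoc k F F U).symm.toLinearMap))) ∘ₗ
        (LinearMap.rTensor M
          (TensorProduct.tensorTensorTensorComm k F F U (F ⊗[k] U)).toLinearMap) ∘ₗ
        (LinearMap.rTensor M (LinearMap.lTensor (F ⊗[k] F)
          ((TensorProduct.assoc k U F U).toLinearMap ∘ₗ (LinearMap.rTensor U cU)))) ∘ₗ
        (TensorProduct.assoc k (F ⊗[k] F) (U ⊗[k] U) M).symm.toLinearMap ∘ₗ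
        (TensorProduct.assoc k F F ((U ⊗[k] U) ⊗[k] M)).symm.toLinearMap ∘ₗ
        (LinearMap.lTensor F (LinearMap.lTensor F
          ((TensorProduct.assoc k U U M).symm.toLinearMap))) ∘ₗ
        LinearMap.lTensor F (LinearMap.lTensor F (LinearMap.lTensor U cmU ∘ₗ cmU)) ∘ₗ
        LinearMap.lTensor F cmF ∘ₗ cmF := by
        rw [tailL hF1 hU1]
    _ = (bigPhi k F U (M := M)).toLinearMap ∘ₗ
          LinearMap.lTensor F (mixMap k F U cU (U ⊗[k] M)) ∘ₗ
          LinearMap.lTensor F (LinearMap.lTensor F (LinearMap.lTensor U cmU ∘ₗ cmU)) ∘ₗ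
          LinearMap.lTensor F cmF ∘ₗ cmF := by
        exact hkey

theorem comodule_over_bicrossed_product_iff
    -- the matched pair structure maps
    (act : U →ₗ[k] F →ₗ[k] F) (cU : U →ₗ[k] U ⊗[k] F)
    -- the two comodule structures on `M`
    (cmF : M →ₗ[k] F ⊗[k] M) (cmU : M →ₗ[k] U ⊗[k] M)
    (hF : IsComodG (Coalgebra.comul (R := k) (A := F))
      (Coalgebra.counit (R := k) (A := F)) cmF)
    (hU : IsComodG (Coalgebra.comul (R := k) (A := U))
      (Coalgebra.counit (R := k) (A := U)) cmU) :
    -- the combined map `m ↦ m⟪₋₁⟫ ⊗ m⟪₀⟫⟦₋₁⟧ ⊗ m⟪₀⟫⟦₀⟧` is an `F ⋈ U`-comodule iff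
    IsComodG (bprodComul k F U cU) (bprodCounit k F U)
      ((TensorProduct.assoc k F U M).symm.toLinearMap ∘ₗ (LinearMap.lTensor F cmU) ∘ₗ cmF)
      ↔
    -- the mixed compatibility (in `U ⊗ (F ⊗ M)`):
    ((LinearMap.lTensor U
        ((LinearMap.rTensor M (LinearMap.mul' k F)) ∘ₗ
          (TensorProduct.assoc k F F M).symm.toLinearMap)) ∘ₗ
      (swapHead k F U (F ⊗[k] M)) ∘ₗ
        (LinearMap.lTensor F ((TensorProduct.assoc k U F M).toLinearMap ∘ₗ
          (LinearMap.rTensor M cU))) ∘ₗ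
          (LinearMap.lTensor F cmU) ∘ₗ cmF
      = (LinearMap.lTensor U cmF) ∘ₗ cmU) := by
  have hstmt : ((LinearMap.lTensor U
        ((LinearMap.rTensor M (LinearMap.mul' k F)) ∘ₗ
          (TensorProduct.assoc k F F M).symm.toLinearMap)) ∘ₗ
      (swapHead k F U (F ⊗[k] M)) ∘ₗ
        (LinearMap.lTensor F ((TensorProduct.assoc k U F M).toLinearMap ∘ₗ
          (LinearMap.rTensor M cU))) ∘ₗ
          (LinearMap.lTensor F cmU) ∘ₗ cmF)
      = mixMap k F U cU M ∘ₗ LinearMap.lTensor F cmU ∘ₗ cmF := by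
    simp only [mixMap, LinearMap.comp_assoc]
  rw [hstmt]
  have hcU : (((TensorProduct.lid k M).toLinearMap ∘ₗ
      LinearMap.rTensor M (Coalgebra.counit (R := k) (A := U))) ∘ₗ cmU) = LinearMap.id := by
    rw [LinearMap.comp_assoc]; exact hU.2
  -- the counit axiom always holds
  have hcounit : (TensorProduct.lid k M).toLinearMap ∘ₗ
      LinearMap.rTensor M (bprodCounit k F U) ∘ₗ
      ((TensorProduct.assoc k F U M).symm.toLinearMap ∘ₗ LinearMap.lTensor F cmU ∘ₗ cmF)
      = LinearMap.id := by
    have h := congrArg (fun g => g ∘ₗ (LinearMap.lTensor F cmU ∘ₗ cmF))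
      (counitStruct (M := M))
    simp only [LinearMap.comp_assoc] at h
    rw [h]
    rw [show LinearMap.lTensor F ((TensorProduct.lid k M).toLinearMap ∘ₗ
        LinearMap.rTensor M (Coalgebra.counit (R := k) (A := U))) ∘ₗ
        (LinearMap.lTensor F cmU ∘ₗ cmF) = cmF from by
      rw [← LinearMap.comp_assoc, ← LinearMap.lTensor_comp, hcU, LinearMap.lTensor_id,
        LinearMap.id_comp]]
    exact hF.2
  -- grouping of the L-side
  have hgroup : LinearMap.lTensor F (mixMap k F U cU (U ⊗[k] M)) ∘ₗ
        LinearMap.lTensor F (LinearMap.lTensor F (LinearMap.lTensor U cmU ∘ₗ cmU)) ∘ₗ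
        LinearMap.lTensor F cmF ∘ₗ cmF
      = LinearMap.lTensor F (mixMap k F U cU (U ⊗[k] M) ∘ₗ
          LinearMap.lTensor F (LinearMap.lTensor U cmU ∘ₗ cmU) ∘ₗ cmF) ∘ₗ cmF := by
    simp only [LinearMap.lTensor_comp, LinearMap.comp_assoc]
  have hW1 : LinearMap.lTensor U (LinearMap.lTensor F cmU) ∘ₗ
        (mixMap k F U cU M ∘ₗ LinearMap.lTensor F cmU ∘ₗ cmF)
      = mixMap k F U cU (U ⊗[k] M) ∘ₗ
          LinearMap.lTensor F (LinearMap.lTensor U cmU ∘ₗ cmU) ∘ₗ cmF := by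
    calc LinearMap.lTensor U (LinearMap.lTensor F cmU) ∘ₗ
          (mixMap k F U cU M ∘ₗ LinearMap.lTensor F cmU ∘ₗ cmF)
        = (LinearMap.lTensor U (LinearMap.lTensor F cmU) ∘ₗ mixMap k F U cU M) ∘ₗ
            LinearMap.lTensor F cmU ∘ₗ cmF := by simp only [LinearMap.comp_assoc]
      _ = (mixMap k F U cU (U ⊗[k] M) ∘ₗ LinearMap.lTensor F (LinearMap.lTensor U cmU)) ∘ₗ
            LinearMap.lTensor F cmU ∘ₗ cmF := by rw [mixMap_nat]
      _ = mixMap k F U cU (U ⊗[k] M) ∘ₗ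
            (LinearMap.lTensor F (LinearMap.lTensor U cmU) ∘ₗ LinearMap.lTensor F cmU) ∘ₗ
            cmF := by simp only [LinearMap.comp_assoc]
      _ = mixMap k F U cU (U ⊗[k] M) ∘ₗ
            LinearMap.lTensor F (LinearMap.lTensor U cmU ∘ₗ cmU) ∘ₗ cmF := by
          rw [← LinearMap.lTensor_comp]
  have hW2 : LinearMap.lTensor U (LinearMap.lTensor F cmU) ∘ₗ
        (LinearMap.lTensor U cmF ∘ₗ cmU)
      = LinearMap.lTensor U (LinearMap.lTensor F cmU ∘ₗ cmF) ∘ₗ cmU := by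
    rw [← LinearMap.comp_assoc, ← LinearMap.lTensor_comp]
  have hkill : ∀ V : M →ₗ[k] U ⊗[k] (F ⊗[k] M),
      LinearMap.lTensor U (LinearMap.lTensor F ((TensorProduct.lid k M).toLinearMap ∘ₗ
          LinearMap.rTensor M (Coalgebra.counit (R := k) (A := U)))) ∘ₗ
        (LinearMap.lTensor U (LinearMap.lTensor F cmU) ∘ₗ V) = V := by
    intro V
    rw [← LinearMap.comp_assoc, ← LinearMap.lTensor_comp, ← LinearMap.lTensor_comp, hcU,
      LinearMap.lTensor_id, LinearMap.lTensor_id, LinearMap.id_comp]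
  constructor
  · intro h
    have heq := h.1
    rw [lemmaL hF.1 hU.1, lemmaR, hgroup] at heq
    have heq3 : LinearMap.lTensor F (mixMap k F U cU (U ⊗[k] M) ∘ₗ
          LinearMap.lTensor F (LinearMap.lTensor U cmU ∘ₗ cmU) ∘ₗ cmF) ∘ₗ cmF
        = LinearMap.lTensor F (LinearMap.lTensor U (LinearMap.lTensor F cmU ∘ₗ cmF) ∘ₗ cmU) ∘ₗ
            cmF := by
      ext m
      have h' := LinearMap.congr_fun heq m
      simp only [LinearMap.comp_apply, LinearEquiv.coe_coe] at h' ⊢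
      exact (bigPhi k F U (M := M)).injective h'
    have heq4 : mixMap k F U cU (U ⊗[k] M) ∘ₗ
          LinearMap.lTensor F (LinearMap.lTensor U cmU ∘ₗ cmU) ∘ₗ cmF
        = LinearMap.lTensor U (LinearMap.lTensor F cmU ∘ₗ cmF) ∘ₗ cmU := by
      have e1 := extract_comod (X := U ⊗[k] (F ⊗[k] (U ⊗[k] M))) (Coalgebra.counit (R := k) (A := F)) cmF hF.2
          (mixMap k F U cU (U ⊗[k] M) ∘ₗ
            LinearMap.lTensor F (LinearMap.lTensor U cmU ∘ₗ cmU) ∘ₗ cmF)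
      have e2 := extract_comod (X := U ⊗[k] (F ⊗[k] (U ⊗[k] M))) (Coalgebra.counit (R := k) (A := F)) cmF hF.2
          (LinearMap.lTensor U (LinearMap.lTensor F cmU ∘ₗ cmF) ∘ₗ cmU)
      rw [heq3] at e1
      exact e1.symm.trans e2
    calc mixMap k F U cU M ∘ₗ LinearMap.lTensor F cmU ∘ₗ cmF
        = LinearMap.lTensor U (LinearMap.lTensor F ((TensorProduct.lid k M).toLinearMap ∘ₗ
            LinearMap.rTensor M (Coalgebra.counit (R := k) (A := U)))) ∘ₗ
            (LinearMap.lTensor U (LinearMap.lTensor F cmU) ∘ₗ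
              (mixMap k F U cU M ∘ₗ LinearMap.lTensor F cmU ∘ₗ cmF)) := (hkill _).symm
      _ = LinearMap.lTensor U (LinearMap.lTensor F ((TensorProduct.lid k M).toLinearMap ∘ₗ
            LinearMap.rTensor M (Coalgebra.counit (R := k) (A := U)))) ∘ₗ
            (LinearMap.lTensor U (LinearMap.lTensor F cmU) ∘ₗ
              (LinearMap.lTensor U cmF ∘ₗ cmU)) := by rw [hW1, heq4, ← hW2]
      _ = LinearMap.lTensor U cmF ∘ₗ cmU := hkill _
  · intro hTS
    refine ⟨?_, hcounit⟩
    rw [lemmaL hF.1 hU.1, lemmaR, hgroup]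
    have heq4 : mixMap k F U cU (U ⊗[k] M) ∘ₗ
          LinearMap.lTensor F (LinearMap.lTensor U cmU ∘ₗ cmU) ∘ₗ cmF
        = LinearMap.lTensor U (LinearMap.lTensor F cmU ∘ₗ cmF) ∘ₗ cmU := by
      rw [← hW1, hTS, hW2]
    rw [heq4]

end Nat

end
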